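/- Let n be a natural number and let 𝒰 be a union closed set on Ω_n with 𝒰 ≠ {Ω_n, ∅}. Let A be the largest non-empty element of 𝒰 with respect to the order < (i.e., every non-empty B ∈ 𝒰 with B ≠ A satisfies B < A). Then 𝒰 \ {A} is again a union closed set on Ω_n. -/

import Mathlib

/-- Binary encoding of a subset `A ⊆ Ω_n = {1,…,n}` (modeled as `Finset (Fin n)`):
`b(A) = Σ_{i∈A} 2^(i-1)`. -/
def bcode {n : ℕ} (A : Finset (Fin n)) : ℕ := ∑ i ∈ A, 2 ^ (i : ℕ)

/-- The order on subsets of `Ω_n`: `A < B` iff `B` has fewer elements than `A`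
(sets with more elements are smaller), or they have the same number of elements
and `b(A) < b(B)`. -/
def setLT {n : ℕ} (A B : Finset (Fin n)) : Prop :=
  B.card < A.card ∨ (A.card = B.card ∧ bcode A < bcode B)

/-- A union closed set on `Ω_n`: a family of subsets of `Ω_n` closed under
pairwise unions that contains the full set `Ω_n` and the empty set. -/
def IsUCS {n : ℕ} (U : Finset (Finset (Fin n))) : Prop :=
  (∀ A ∈ U, ∀ B ∈ U, A ∪ B ∈ U) ∧ Finset.univ ∈ U ∧ ∅ ∈ U

/-- If `𝒰 ≠ {Ω_n, ∅}` is a union closed set and `A` is the largest non-empty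
element of `𝒰`, then `𝒰 \ {A}` is again a union closed set. -/
theorem ucs_erase_largest {n : ℕ} (U : Finset (Finset (Fin n))) (hU : IsUCS U)
    (hne : U ≠ {Finset.univ, ∅}) (A : Finset (Fin n)) (hA : A ∈ U) (hAne : A ≠ ∅)
    (hmax : ∀ B ∈ U, B ≠ ∅ → B ≠ A → setLT B A) :
    IsUCS (U.erase A) := by
  obtain ⟨hclosed, huniv, hempty⟩ := hU
  have hAuniv : A ≠ Finset.univ := by
    intro h
    apply hne
    apply Finset.eq_of_subset_of_card_le ?_ ?_
    · intro X hX
      simp only [Finset.mem_insert, Finset.mem_singleton]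
      by_contra hcon
      push_neg at hcon
      obtain ⟨h1, h2⟩ := hcon
      have := hmax X hX h2.ne_empty (by rw [h]; exact h1)
      rcases this with h3 | ⟨h3, _⟩
      · rw [h] at h3
        have := Finset.card_le_univ X
        simp [Fintype.card_fin] at this
        simp [Finset.card_univ] at h3
        omega
      · rw [h] at h3
        exact h1 (Finset.eq_univ_of_card X h3)
    · have h1 : Finset.univ ∈ U := huniv
      have h2 : (∅ : Finset (Fin n)) ∈ U := hempty
      have hne' : (Finset.univ : Finset (Fin n)) ≠ ∅ := by rw [← h]; exact hAne
      calc ({Finset.univ, ∅} : Finset (Finset (Fin n))).card ≤ 2 :=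
            Finset.card_insert_le _ _ |>.trans (by simp)
        _ ≤ U.card := Finset.one_lt_card.mpr ⟨_, h1, _, h2, hne'⟩
  refine ⟨?_, Finset.mem_erase.mpr ⟨hAuniv.symm, huniv⟩, Finset.mem_erase.mpr ⟨Ne.symm hAne, hempty⟩⟩
  intro B hB C hC
  rw [Finset.mem_erase] at hB hC ⊢
  refine ⟨?_, hclosed B hB.2 C hC.2⟩
  intro hcon
  rcases eq_or_ne B ∅ with rfl | hBne
  · exact hC.1 (by simpa using hcon)
  have hsub : B ⊆ A := by rw [← hcon]; exact Finset.subset_union_left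
  have hBA : B ⊂ A := hsub.ssubset_of_ne hB.1
  have hcard := Finset.card_lt_card hBA
  rcases hmax B hB.2 hBne hB.1 with h | ⟨h, _⟩ <;> omega
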